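/- Let Λ = ℤ[t_1,…,t_n] be the polynomial ring in n variables and let C = Λ[ζ]/(∏_{i=1}^n (ζ + t_i)). For each i the evaluation ζ ↦ −t_i induces a Λ-algebra homomorphism C → Λ; together these give a Λ-algebra homomorphism φ : C → Λ^{⊕n}, φ(ζ) = (−t_1, …, −t_n). A tuple (u_1, …, u_n) ∈ Λ^{⊕n} lies in the image of φ if and only if for all i ≠ j the difference u_i − u_j is divisible by t_j − t_i in Λ. -/

import Mathlib

open Polynomial

/-- `Λ = ℤ[t_1, …, t_n]`. -/
abbrev Lam (n : ℕ) : Type := MvPolynomial (Fin n) ℤ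

/-- The polynomial `∏_{i=1}^n (ζ + t_i)` in `Λ[ζ]`. -/
noncomputable def relPoly (n : ℕ) : Polynomial (Lam n) :=
  ∏ i : Fin n, (Polynomial.X + Polynomial.C (MvPolynomial.X i))

/-- `C = Λ[ζ] / (∏_{i=1}^n (ζ + t_i))`, the equivariant cohomology ring `H_T^* ℙ^{n-1}`. -/
abbrev CRing (n : ℕ) : Type := Polynomial (Lam n) ⧸ Ideal.span {relPoly n}

/-- The `Λ`-algebra homomorphism `Λ[ζ] → Λ^{⊕ n}` sending `ζ` to `(-t_1, …, -t_n)`,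
given in the `i`-th coordinate by evaluation `ζ ↦ -t_i`. -/
noncomputable def evalAll (n : ℕ) : Polynomial (Lam n) →ₐ[Lam n] (Fin n → Lam n) :=
  Pi.algHom _ _ fun i => Polynomial.aeval (-(MvPolynomial.X i))

lemma evalAll_relPoly (n : ℕ) : evalAll n (relPoly n) = 0 := by
  funext i
  show Polynomial.aeval (-(MvPolynomial.X i)) (relPoly n) = 0
  rw [relPoly, map_prod]
  refine Finset.prod_eq_zero (Finset.mem_univ i) ?_
  simp

/-- The induced `Λ`-algebra homomorphism `φ : C → Λ^{⊕ n}`, `φ(ζ) = (-t_1, …, -t_n)`,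
i.e. the restriction of `H_T^* ℙ^{n-1}` to the torus-fixed points. -/
noncomputable def phi (n : ℕ) : CRing n →ₐ[Lam n] (Fin n → Lam n) :=
  Ideal.Quotient.liftₐ _ (evalAll n) (by
    intro a ha
    rw [Ideal.mem_span_singleton] at ha
    obtain ⟨c, rfl⟩ := ha
    rw [map_mul, evalAll_relPoly, zero_mul])


-- auxiliary lemmas


lemma prime_X_mv {m : ℕ} (j : Fin (m + 1)) :
    Prime (MvPolynomial.X j : MvPolynomial (Fin (m + 1)) ℤ) := by
  let e := (MvPolynomial.renameEquiv ℤ (finSuccEquiv' j)).trans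
    (MvPolynomial.optionEquivLeft ℤ (Fin m))
  have he : e (MvPolynomial.X j) = Polynomial.X := by
    simp [e, finSuccEquiv'_at, MvPolynomial.optionEquivLeft_X_none]
  rw [← MulEquiv.prime_iff e.toMulEquiv]
  simpa [he] using Polynomial.prime_X

lemma prime_X_sub {n : ℕ} (j k : Fin n) (h : j ≠ k) :
    Prime (MvPolynomial.X j - MvPolynomial.X k : Lam n) := by
  obtain ⟨m, rfl⟩ : ∃ m, n = m + 1 := by
    cases n with
    | zero => exact j.elim0
    | succ m => exact ⟨m, rfl⟩
  let f : Fin (m + 1) → Lam (m + 1) :=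
    Function.update MvPolynomial.X j (MvPolynomial.X j - MvPolynomial.X k)
  let g : Fin (m + 1) → Lam (m + 1) :=
    Function.update MvPolynomial.X j (MvPolynomial.X j + MvPolynomial.X k)
  have hfk : f k = MvPolynomial.X k := by simp [f, Function.update_of_ne (Ne.symm h)]
  have hgk : g k = MvPolynomial.X k := by simp [g, Function.update_of_ne (Ne.symm h)]
  have h1 : (MvPolynomial.aeval g).comp (MvPolynomial.aeval f) = AlgHom.id ℤ (Lam (m + 1)) := by
    apply MvPolynomial.algHom_ext
    intro i
    by_cases hij : i = j
    · subst hij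
      simp [f, g, Function.update_of_ne (Ne.symm h)]
    · simp [f, g, Function.update_of_ne hij]
  have h2 : (MvPolynomial.aeval f).comp (MvPolynomial.aeval g) = AlgHom.id ℤ (Lam (m + 1)) := by
    apply MvPolynomial.algHom_ext
    intro i
    by_cases hij : i = j
    · subst hij
      simp [f, g, Function.update_of_ne (Ne.symm h)]
    · simp [f, g, Function.update_of_ne hij]
  let e : Lam (m + 1) ≃ₐ[ℤ] Lam (m + 1) :=
    AlgEquiv.ofAlgHom (MvPolynomial.aeval f) (MvPolynomial.aeval g) h2 h1
  have he : e (MvPolynomial.X j) = MvPolynomial.X j - MvPolynomial.X k := by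
    simp [e, f, AlgEquiv.ofAlgHom]
  have := (MulEquiv.prime_iff e.toMulEquiv).mpr (prime_X_mv j)
  simpa [he] using this

lemma X_sub_not_dvd {n : ℕ} {j k l : Fin n} (hjk : j ≠ k) (hlk : l ≠ k) (hjl : j ≠ l) :
    ¬ (MvPolynomial.X j - MvPolynomial.X k : Lam n) ∣
      (MvPolynomial.X l - MvPolynomial.X k) := by
  intro hd
  let ψ : Lam n →ₐ[ℤ] Lam n :=
    MvPolynomial.aeval (Function.update MvPolynomial.X j (MvPolynomial.X k))
  have h0 : ψ (MvPolynomial.X j - MvPolynomial.X k) = 0 := by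
    simp [ψ, Function.update_of_ne (Ne.symm hjk)]
  have h1 : ψ (MvPolynomial.X l - MvPolynomial.X k) =
      MvPolynomial.X l - MvPolynomial.X k := by
    simp [ψ, Function.update_of_ne (Ne.symm hjl), Function.update_of_ne (Ne.symm hjk)]
  have := map_dvd ψ hd
  rw [h0, h1, zero_dvd_iff, sub_eq_zero] at this
  exact hlk (MvPolynomial.X_injective this)

lemma prod_primes_dvd' {R : Type*} [CommRing R] [IsDomain R] {ι : Type*} [DecidableEq ι]
    (s : Finset ι) (f : ι → R)
    (hp : ∀ i ∈ s, Prime (f i))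
    (hnd : ∀ i ∈ s, ∀ j ∈ s, i ≠ j → ¬ f i ∣ f j) :
    ∀ r : R, (∀ i ∈ s, f i ∣ r) → (∏ i ∈ s, f i) ∣ r := by
  induction s using Finset.induction_on with
  | empty => intro r _; simp
  | insert a s ha ih =>
    intro r hd
    obtain ⟨m, hm⟩ := hd a (Finset.mem_insert_self a s)
    have hdm : ∀ i ∈ s, f i ∣ m := by
      intro i hi
      have hia : i ≠ a := fun h => ha (h ▸ hi)
      have hpi : Prime (f i) := hp i (Finset.mem_insert_of_mem hi)
      have : f i ∣ f a * m := hm ▸ hd i (Finset.mem_insert_of_mem hi)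
      rcases hpi.dvd_mul.mp this with h | h
      · exact absurd h (hnd i (Finset.mem_insert_of_mem hi) a (Finset.mem_insert_self a s) hia)
      · exact h
    have := ih (fun i hi => hp i (Finset.mem_insert_of_mem hi))
      (fun i hi j hj hij => hnd i (Finset.mem_insert_of_mem hi) j (Finset.mem_insert_of_mem hj) hij)
      m hdm
    rw [Finset.prod_insert ha, hm]
    exact mul_dvd_mul_left _ this

lemma aeval_self {R : Type*} [CommRing R] (x : R) (p : Polynomial R) :
    Polynomial.aeval x p = p.eval x := by
  rw [← Polynomial.coe_aeval_eq_eval]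

lemma exists_poly {n : ℕ} (u : Fin n → Lam n)
    (H : ∀ i j : Fin n, i ≠ j →
      (MvPolynomial.X j - MvPolynomial.X i : Lam n) ∣ (u i - u j)) :
    ∀ k : ℕ, ∃ p : Polynomial (Lam n), ∀ i : Fin n, (i : ℕ) < k →
      Polynomial.aeval (-(MvPolynomial.X i)) p = u i := by
  intro k
  induction k with
  | zero => exact ⟨0, fun i h => absurd h (Nat.not_lt_zero _)⟩
  | succ k ih =>
    obtain ⟨p, hp⟩ := ih
    by_cases hk : k < n
    · set κ : Fin n := ⟨k, hk⟩ with hκ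
      set s : Finset (Fin n) := Finset.univ.filter (fun j => (j : ℕ) < k) with hs
      have hmem : ∀ j, j ∈ s ↔ (j : ℕ) < k := by
        intro j; simp [hs]
      have hjκ : ∀ j ∈ s, j ≠ κ := by
        intro j hj
        have := (hmem j).mp hj
        exact fun h => by simp [h, hκ] at this
      set r : Lam n := u κ - Polynomial.aeval (-(MvPolynomial.X κ)) p with hr
      have hdvd : ∀ j ∈ s, (MvPolynomial.X j - MvPolynomial.X κ) ∣ r := by
        intro j hj
        have h1 : (MvPolynomial.X j - MvPolynomial.X κ : Lam n) ∣ (u κ - u j) :=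
          H κ j (Ne.symm (hjκ j hj))
        have h2 : (MvPolynomial.X j - MvPolynomial.X κ : Lam n) ∣
            (u j - Polynomial.aeval (-(MvPolynomial.X κ)) p) := by
          rw [← hp j ((hmem j).mp hj), aeval_self, aeval_self]
          have := Polynomial.sub_dvd_eval_sub (-(MvPolynomial.X j)) (-(MvPolynomial.X κ)) p
          have heq : (-(MvPolynomial.X j) - -(MvPolynomial.X κ) : Lam n)
              = -(MvPolynomial.X j - MvPolynomial.X κ) := by ring
          rw [heq] at this
          exact (neg_dvd.mp this)
        have := dvd_add h1 h2
        rwa [sub_add_sub_cancel] at this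
      have hprod : (∏ j ∈ s, (MvPolynomial.X j - MvPolynomial.X κ : Lam n)) ∣ r := by
        refine prod_primes_dvd' s _ ?_ ?_ r hdvd
        · intro j hj; exact prime_X_sub j κ (hjκ j hj)
        · intro i hi j hj hij
          exact X_sub_not_dvd (hjκ i hi) (hjκ j hj) hij
      obtain ⟨c, hc⟩ := hprod
      refine ⟨p + Polynomial.C c * ∏ j ∈ s, (Polynomial.X + Polynomial.C (MvPolynomial.X j)), ?_⟩
      intro i hi
      rw [map_add, map_mul, Polynomial.aeval_C, map_prod]
      simp only [Algebra.algebraMap_self_apply]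
      have hfac : ∀ j : Fin n, Polynomial.aeval (-(MvPolynomial.X i))
          (Polynomial.X + Polynomial.C (MvPolynomial.X j) : Polynomial (Lam n))
          = (MvPolynomial.X j - MvPolynomial.X i : Lam n) := by
        intro j; simp [sub_eq_neg_add, add_comm]
      by_cases hik : (i : ℕ) < k
      · have hz : (∏ j ∈ s, Polynomial.aeval (-(MvPolynomial.X i))
            (Polynomial.X + Polynomial.C (MvPolynomial.X j) : Polynomial (Lam n))) = 0 :=
          Finset.prod_eq_zero ((hmem i).mpr hik) (by rw [hfac i]; exact sub_self _)
        rw [hz, mul_zero, add_zero]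
        exact hp i hik
      · have hieq : i = κ := by
          apply Fin.ext
          simp only [hκ]
          omega
        subst hieq
        have hpr : (∏ j ∈ s, Polynomial.aeval (-(MvPolynomial.X κ))
            (Polynomial.X + Polynomial.C (MvPolynomial.X j) : Polynomial (Lam n)))
            = ∏ j ∈ s, (MvPolynomial.X j - MvPolynomial.X κ : Lam n) :=
          Finset.prod_congr rfl fun j _ => hfac j
        rw [hpr]
        have h2 : c * ∏ j ∈ s, (MvPolynomial.X j - MvPolynomial.X κ : Lam n) = r := by
          rw [hc]; ring
        rw [h2, hr]
        ring
    · refine ⟨p, fun i hi => hp i ?_⟩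
      have : (i : ℕ) < n := i.isLt
      omega

/-- GKM description of the image of localization for `ℙ^{n-1}`: a tuple
`(u_1, …, u_n) ∈ Λ^{⊕ n}` is in the image of `φ` if and only if `t_j - t_i` divides
`u_i - u_j` for all `i ≠ j`. -/
theorem mem_range_phi_iff (n : ℕ) (u : Fin n → Lam n) :
    u ∈ Set.range (phi n) ↔
      ∀ i j : Fin n, i ≠ j →
        (MvPolynomial.X j - MvPolynomial.X i : Lam n) ∣ (u i - u j) := by
  constructor
  · rintro ⟨q, rfl⟩ i j hij
    obtain ⟨p, rfl⟩ := Ideal.Quotient.mk_surjective q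
    have hval : ∀ l : Fin n, phi n (Ideal.Quotient.mk _ p) l
        = Polynomial.aeval (-(MvPolynomial.X l)) p := fun l => rfl
    rw [hval i, hval j, aeval_self, aeval_self]
    have := Polynomial.sub_dvd_eval_sub (-(MvPolynomial.X i)) (-(MvPolynomial.X j)) p
    have heq : (-(MvPolynomial.X i) - -(MvPolynomial.X j) : Lam n)
        = MvPolynomial.X j - MvPolynomial.X i := by ring
    rwa [heq] at this
  · intro H
    obtain ⟨p, hp⟩ := exists_poly u H n
    refine ⟨Ideal.Quotient.mk _ p, ?_⟩
    funext l
    exact hp l l.isLt
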